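/- Let X be a locally complete and locally cartesian closed ordered set. A morphism f in Fam(X) is an effective descent morphism if and only if f is a descent morphism. -/

import Mathlib

open CategoryTheory Limits

universe u
universe u₁ v₁ u₂ v₂

attribute [local instance] CategoryTheory.ConcreteCategory.instFunLike

namespace Desc

/-! ### Order-theoretic notions for preorders ("ordered sets") -/

/-- `x ≅ y`: equivalence in a preorder. -/
def EquivLE {X : Type u} [Preorder X] (x y : X) : Prop := x ≤ y ∧ y ≤ x

/-- `m` is a binary meet (greatest lower bound) of `y` and `z`. -/
def IsMeet {X : Type u} [Preorder X] (y z m : X) : Prop :=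
  m ≤ y ∧ m ≤ z ∧ ∀ u, u ≤ y → u ≤ z → u ≤ m

/-- `j` is a join (least upper bound) of the subset `S` computed in the down-set `↓x`. -/
def IsLocalJoin {X : Type u} [Preorder X] (x : X) (S : Set X) (j : X) : Prop :=
  j ≤ x ∧ (∀ s ∈ S, s ≤ j) ∧ ∀ u, u ≤ x → (∀ s ∈ S, s ≤ u) → j ≤ u

/-- `X` is locally complete: every subset of a down-set `↓x` has a join in `↓x`. -/
def LocallyComplete (X : Type u) [Preorder X] : Prop :=
  ∀ x : X, ∀ S : Set X, (∀ s ∈ S, s ≤ x) → ∃ j, IsLocalJoin x S j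

/-- `X` is complete: every subset has a join (least upper bound). -/
def CompleteOrd (X : Type u) [Preorder X] : Prop :=
  ∀ S : Set X, ∃ j, IsLUB S j

/-- `X` locally has binary meets: each down-set `↓x` has binary meets
(these are automatically meets in `X` of the pair). -/
def LocallyBinaryMeets (X : Type u) [Preorder X] : Prop :=
  ∀ x y z : X, y ≤ x → z ≤ x → ∃ m, IsMeet y z m

/-- `X` is locally cartesian closed: each down-set `↓x` has binary meets and
exponentials `z^y` satisfying `w ∧ y ≤ z ↔ w ≤ z^y`. -/
def LocallyCartesianClosed (X : Type u) [Preorder X] : Prop :=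
  LocallyBinaryMeets X ∧
    ∀ x y z : X, y ≤ x → z ≤ x →
      ∃ e, e ≤ x ∧ ∀ w, w ≤ x → ((∃ m, IsMeet w y m ∧ m ≤ z) ↔ w ≤ e)

theorem LocallyComplete.meets {X : Type u} [Preorder X] (h : LocallyComplete X) :
    LocallyBinaryMeets X := by
  intro x y z hy hz
  obtain ⟨j, hj⟩ := h x {u | u ≤ y ∧ u ≤ z} (fun s hs => hs.1.trans hy)
  exact ⟨j, hj.2.2 y hy (fun s hs => hs.1), hj.2.2 z hz (fun s hs => hs.2),
    fun u h1 h2 => hj.2.1 u ⟨h1, h2⟩⟩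

theorem CompleteOrd.meets {X : Type u} [Preorder X] (h : CompleteOrd X) :
    LocallyBinaryMeets X := by
  intro _ y z _ _
  obtain ⟨j, hj⟩ := h {u | u ≤ y ∧ u ≤ z}
  exact ⟨j, hj.2 (fun u hu => hu.1), hj.2 (fun u hu => hu.2),
    fun u h1 h2 => hj.1 ⟨h1, h2⟩⟩

/-! ### Descent-theoretic notions -/

/-- A morphism `f : A ⟶ B` in a category with pullbacks is an *effective descent morphism*
if the comparison functor from `𝒜/B` to the Eilenberg–Moore category of the monad induced on
`𝒜/A` by the adjunction `f_! ⊣ f*` is an equivalence, i.e. `f*` is monadic. -/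
def IsEffectiveDescentMorphism {C : Type*} [Category C] [HasPullbacks C]
    {A B : C} (f : A ⟶ B) : Prop :=
  (Monad.comparison (Over.mapPullbackAdj f)).IsEquivalence

/-- A morphism `f : A ⟶ B` in a category with pullbacks is a *descent morphism*
if the comparison functor from `𝒜/B` to the Eilenberg–Moore category of the monad induced on
`𝒜/A` by the adjunction `f_! ⊣ f*` is fully faithful. -/
def IsDescentMorphism {C : Type*} [Category C] [HasPullbacks C]
    {A B : C} (f : A ⟶ B) : Prop :=
  (Monad.comparison (Over.mapPullbackAdj f)).Full ∧
    (Monad.comparison (Over.mapPullbackAdj f)).Faithful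

/-- A morphism `f : A ⟶ B` is a (pullback-)stable regular epimorphism if every pullback of it
(along any `g : Z ⟶ B`) is a regular epimorphism. -/
def IsStableRegularEpi {C : Type*} [Category C] [HasPullbacks C]
    {A B : C} (f : A ⟶ B) : Prop :=
  ∀ ⦃Z : C⦄ (g : Z ⟶ B), Nonempty (RegularEpi (pullback.snd f g))



section PreordPullbacks

instance : HasPullbacks Preord.{u} := by
  have key : ∀ {A B C : Preord.{u}} (f : A ⟶ C) (g : B ⟶ C), HasLimit (cospan f g) := by
    intro A B C f g
    let P : Preord.{u} := Preord.of {p : A × B // f p.1 = g p.2}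
    let fst : P ⟶ A := ConcreteCategory.ofHom ⟨fun p => p.1.1, fun _ _ h => h.1⟩
    let snd : P ⟶ B := ConcreteCategory.ofHom ⟨fun p => p.1.2, fun _ _ h => h.2⟩
    have eq : fst ≫ f = snd ≫ g := ConcreteCategory.hom_ext _ _ (fun p => p.2)
    refine HasLimit.mk ⟨_, PullbackCone.IsLimit.mk eq
      (fun s => ConcreteCategory.ofHom ⟨fun d => ⟨(s.fst d, s.snd d),
        congrFun (congrArg (fun (h : s.pt ⟶ C) => (h : s.pt → C)) s.condition) d⟩,
        fun _ _ h => ⟨s.fst.hom.monotone h, s.snd.hom.monotone h⟩⟩)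
      (fun s => rfl) (fun s => rfl) (fun s m h1 h2 => ?_)⟩
    apply ConcreteCategory.hom_ext
    intro d
    apply Subtype.ext
    exact Prod.ext (congrFun (congrArg (fun (h : s.pt ⟶ A) => (h : s.pt → A)) h1) d)
      (congrFun (congrArg (fun (h : s.pt ⟶ B) => (h : s.pt → B)) h2) d)
  exact @hasPullbacks_of_hasLimit_cospan _ _ (fun {A B C f g} => key f g)

instance : HasPullbacks PartOrd.{u} := by
  have key : ∀ {A B C : PartOrd.{u}} (f : A ⟶ C) (g : B ⟶ C), HasLimit (cospan f g) := by
    intro A B C f g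
    let P : PartOrd.{u} := PartOrd.of {p : A × B // f p.1 = g p.2}
    let fst : P ⟶ A := ConcreteCategory.ofHom ⟨fun p => p.1.1, fun _ _ h => h.1⟩
    let snd : P ⟶ B := ConcreteCategory.ofHom ⟨fun p => p.1.2, fun _ _ h => h.2⟩
    have eq : fst ≫ f = snd ≫ g := ConcreteCategory.hom_ext _ _ (fun p => p.2)
    refine HasLimit.mk ⟨_, PullbackCone.IsLimit.mk eq
      (fun s => ConcreteCategory.ofHom ⟨fun d => ⟨(s.fst d, s.snd d),
        congrFun (congrArg (fun (h : s.pt ⟶ C) => (h : s.pt → C)) s.condition) d⟩,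
        fun _ _ h => ⟨s.fst.hom.monotone h, s.snd.hom.monotone h⟩⟩)
      (fun s => rfl) (fun s => rfl) (fun s m h1 h2 => ?_)⟩
    apply ConcreteCategory.hom_ext
    intro d
    apply Subtype.ext
    exact Prod.ext (congrFun (congrArg (fun (h : s.pt ⟶ A) => (h : s.pt → A)) h1) d)
      (congrFun (congrArg (fun (h : s.pt ⟶ B) => (h : s.pt → B)) h2) d)
  exact @hasPullbacks_of_hasLimit_cospan _ _ (fun {A B C f g} => key f g)

end PreordPullbacks



variable (X : Type u) [Preorder X]

/-! ### The lax comma category `Ord // X` -/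

/-- Objects of the lax comma category `Ord // X`: an ordered set `A` together with a
monotone map `α : A → X`. -/
structure OrdComma : Type (u + 1) where
  carrier : Type u
  [str : Preorder carrier]
  map : carrier → X
  mono : Monotone map

attribute [instance] OrdComma.str

variable {X}

/-- Morphisms in `Ord // X`: monotone maps `f` with `α(a) ≤ β(f(a))`. -/
@[ext]
structure OrdCommaHom (A B : OrdComma X) : Type u where
  toFun : A.carrier → B.carrier
  mono : Monotone toFun
  le : ∀ a, A.map a ≤ B.map (toFun a)

instance : Category (OrdComma X) where
  Hom := OrdCommaHom
  id A := ⟨id, monotone_id, fun _ => le_refl _⟩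
  comp f g := ⟨OrdCommaHom.toFun g ∘ OrdCommaHom.toFun f,
    (OrdCommaHom.mono g).comp (OrdCommaHom.mono f),
    fun a => (OrdCommaHom.le f a).trans (OrdCommaHom.le g _)⟩
  id_comp _ := rfl
  comp_id _ := rfl
  assoc _ _ _ := rfl

/-- The underlying function of a morphism in `Ord // X`. -/
def OrdComma.app {A B : OrdComma X} (f : A ⟶ B) : A.carrier → B.carrier :=
  OrdCommaHom.toFun f

/-! ### The category `Fam(X)` of set-indexed families of elements of `X` -/

variable (X) in
/-- Objects of `Fam(X)`: families `(α_j)_{j ∈ J}` of elements of `X`. -/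
structure FamCat : Type (u + 1) where
  idx : Type u
  val : idx → X

/-- Morphisms in `Fam(X)`: functions `f : J → K` with `α_j ≤ β_{f(j)}`. -/
@[ext]
structure FamHom (A B : FamCat X) : Type u where
  toFun : A.idx → B.idx
  le : ∀ j, A.val j ≤ B.val (toFun j)

instance : Category (FamCat X) where
  Hom := FamHom
  id A := ⟨id, fun _ => le_refl _⟩
  comp f g := ⟨FamHom.toFun g ∘ FamHom.toFun f,
    fun a => (FamHom.le f a).trans (FamHom.le g _)⟩
  id_comp _ := rfl
  comp_id _ := rfl
  assoc _ _ _ := rfl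

/-- The underlying function of a morphism in `Fam(X)`. -/
def FamCat.app {A B : FamCat X} (f : A ⟶ B) : A.idx → B.idx :=
  FamHom.toFun f

/-! ### The category `Ord ×_Set Fam(X)` -/

variable (X) in
/-- Objects of `Ord ×_Set Fam(X)`: an ordered set `C` with an arbitrary function
`χ : C → X`. -/
structure OrdFam : Type (u + 1) where
  carrier : Type u
  [str : Preorder carrier]
  map : carrier → X

attribute [instance] OrdFam.str

/-- Morphisms in `Ord ×_Set Fam(X)`: monotone maps `f` with `χ(c) ≤ ψ(f(c))`. -/
@[ext]
structure OrdFamHom (A B : OrdFam X) : Type u where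
  toFun : A.carrier → B.carrier
  mono : Monotone toFun
  le : ∀ a, A.map a ≤ B.map (toFun a)

instance : Category (OrdFam X) where
  Hom := OrdFamHom
  id A := ⟨id, monotone_id, fun _ => le_refl _⟩
  comp f g := ⟨OrdFamHom.toFun g ∘ OrdFamHom.toFun f,
    (OrdFamHom.mono g).comp (OrdFamHom.mono f),
    fun a => (OrdFamHom.le f a).trans (OrdFamHom.le g _)⟩
  id_comp _ := rfl
  comp_id _ := rfl
  assoc _ _ _ := rfl

/-! ### Functors between these categories -/

variable (X) in
/-- The forgetful functor `Ord // X ⥤ Ord`. -/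
def ordCommaForget : OrdComma X ⥤ Preord.{u} where
  obj A := Preord.of A.carrier
  map f := Preord.ofHom ⟨OrdCommaHom.toFun f, OrdCommaHom.mono f⟩
  map_id _ := rfl
  map_comp _ _ := rfl

variable (X) in
/-- The forgetful functor `Ord // X ⥤ Fam(X)`, `(A, α) ↦ (α(a))_{a ∈ A}`. -/
def ordCommaToFam : OrdComma X ⥤ FamCat X where
  obj A := ⟨A.carrier, A.map⟩
  map f := ⟨OrdCommaHom.toFun f, OrdCommaHom.le f⟩
  map_id _ := rfl
  map_comp _ _ := rfl

variable (X) in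
/-- The projection `ρ₁ : Ord ×_Set Fam(X) ⥤ Ord`. -/
def rho₁ : OrdFam X ⥤ Preord.{u} where
  obj A := Preord.of A.carrier
  map f := Preord.ofHom ⟨OrdFamHom.toFun f, OrdFamHom.mono f⟩
  map_id _ := rfl
  map_comp _ _ := rfl

variable (X) in
/-- The projection `ρ₂ : Ord ×_Set Fam(X) ⥤ Fam(X)`. -/
def rho₂ : OrdFam X ⥤ FamCat X where
  obj A := ⟨A.carrier, A.map⟩
  map f := ⟨OrdFamHom.toFun f, OrdFamHom.le f⟩
  map_id _ := rfl
  map_comp _ _ := rfl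

/-! ### Restrictions `f_x : A_x → B_x` -/

/-- For `(A, α)` in `Ord // X` and `x ∈ X`, the ordered set `A_x = {a ∈ A : x ≤ α(a)}`. -/
def OrdComma.fiber (A : OrdComma X) (x : X) : Preord.{u} :=
  Preord.of {a : A.carrier // x ≤ A.map a}

/-- The restriction `f_x : A_x → B_x` of a morphism `f : (A, α) ⟶ (B, β)` of `Ord // X`. -/
def OrdComma.fiberMap {A B : OrdComma X} (f : A ⟶ B) (x : X) :
    A.fiber x ⟶ B.fiber x :=
  Preord.ofHom ⟨fun a => ⟨OrdCommaHom.toFun f a.1, a.2.trans (OrdCommaHom.le f a.1)⟩,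
    fun _ _ h => OrdCommaHom.mono f h⟩



variable {X : Type u} [Preorder X]

theorem OrdComma.hasPullbacks (hm : LocallyBinaryMeets X) :
    HasPullbacks (OrdComma X) := by
  have key : ∀ {A B C : OrdComma X} (f : A ⟶ C) (g : B ⟶ C), HasLimit (cospan f g) := by
    intro A B C f g
    have hmeet : ∀ p : {p : A.carrier × B.carrier //
        OrdCommaHom.toFun f p.1 = OrdCommaHom.toFun g p.2},
        ∃ m, IsMeet (A.map p.1.1) (B.map p.1.2) m := fun p =>
      hm (C.map (OrdCommaHom.toFun f p.1.1)) _ _ (OrdCommaHom.le f p.1.1)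
        (by rw [p.2]; exact OrdCommaHom.le g p.1.2)
    choose μ hμ using hmeet
    let P : OrdComma X :=
      { carrier := {p : A.carrier × B.carrier //
          OrdCommaHom.toFun f p.1 = OrdCommaHom.toFun g p.2}
        map := μ
        mono := fun p q h => by
          have hpq : p.1 ≤ q.1 := h
          exact (hμ q).2.2 _ ((hμ p).1.trans (A.mono (Prod.le_def.mp hpq).1))
            ((hμ p).2.1.trans (B.mono (Prod.le_def.mp hpq).2)) }
    let pfst : P ⟶ A := ⟨fun p => p.1.1, fun _ _ h => h.1, fun p => (hμ p).1⟩
    let psnd : P ⟶ B := ⟨fun p => p.1.2, fun _ _ h => h.2, fun p => (hμ p).2.1⟩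
    have eq : pfst ≫ f = psnd ≫ g := OrdCommaHom.ext (funext fun p => p.2)
    refine HasLimit.mk ⟨_, PullbackCone.IsLimit.mk eq
      (fun s => ⟨fun d => ⟨(OrdCommaHom.toFun s.fst d, OrdCommaHom.toFun s.snd d),
          congrFun (congrArg OrdCommaHom.toFun s.condition) d⟩,
        fun _ _ h => ⟨OrdCommaHom.mono s.fst h, OrdCommaHom.mono s.snd h⟩,
        fun d => (hμ _).2.2 _ (OrdCommaHom.le s.fst d) (OrdCommaHom.le s.snd d)⟩)
      (fun s => rfl) (fun s => rfl) (fun s m h1 h2 => ?_)⟩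
    apply OrdCommaHom.ext
    funext d
    exact Subtype.ext (Prod.ext (congrFun (congrArg OrdCommaHom.toFun h1) d)
      (congrFun (congrArg OrdCommaHom.toFun h2) d))
  exact @hasPullbacks_of_hasLimit_cospan _ _ (fun {A B C f g} => key f g)

theorem FamCat.hasPullbacks (hm : LocallyBinaryMeets X) :
    HasPullbacks (FamCat X) := by
  have key : ∀ {A B C : FamCat X} (f : A ⟶ C) (g : B ⟶ C), HasLimit (cospan f g) := by
    intro A B C f g
    have hmeet : ∀ p : {p : A.idx × B.idx // FamHom.toFun f p.1 = FamHom.toFun g p.2},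
        ∃ m, IsMeet (A.val p.1.1) (B.val p.1.2) m := fun p =>
      hm (C.val (FamHom.toFun f p.1.1)) _ _ (FamHom.le f p.1.1)
        (by rw [p.2]; exact FamHom.le g p.1.2)
    choose μ hμ using hmeet
    let P : FamCat X :=
      { idx := {p : A.idx × B.idx // FamHom.toFun f p.1 = FamHom.toFun g p.2}
        val := μ }
    let pfst : P ⟶ A := ⟨fun p => p.1.1, fun p => (hμ p).1⟩
    let psnd : P ⟶ B := ⟨fun p => p.1.2, fun p => (hμ p).2.1⟩
    have eq : pfst ≫ f = psnd ≫ g := FamHom.ext (funext fun p => p.2)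
    refine HasLimit.mk ⟨_, PullbackCone.IsLimit.mk eq
      (fun s => ⟨fun d => ⟨(FamHom.toFun s.fst d, FamHom.toFun s.snd d),
          congrFun (congrArg FamHom.toFun s.condition) d⟩,
        fun d => (hμ _).2.2 _ (FamHom.le s.fst d) (FamHom.le s.snd d)⟩)
      (fun s => rfl) (fun s => rfl) (fun s m h1 h2 => ?_)⟩
    apply FamHom.ext
    funext d
    exact Subtype.ext (Prod.ext (congrFun (congrArg FamHom.toFun h1) d)
      (congrFun (congrArg FamHom.toFun h2) d))
  exact @hasPullbacks_of_hasLimit_cospan _ _ (fun {A B C f g} => key f g)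

theorem OrdFam.hasPullbacks (hm : LocallyBinaryMeets X) :
    HasPullbacks (OrdFam X) := by
  have key : ∀ {A B C : OrdFam X} (f : A ⟶ C) (g : B ⟶ C), HasLimit (cospan f g) := by
    intro A B C f g
    have hmeet : ∀ p : {p : A.carrier × B.carrier //
        OrdFamHom.toFun f p.1 = OrdFamHom.toFun g p.2},
        ∃ m, IsMeet (A.map p.1.1) (B.map p.1.2) m := fun p =>
      hm (C.map (OrdFamHom.toFun f p.1.1)) _ _ (OrdFamHom.le f p.1.1)
        (by rw [p.2]; exact OrdFamHom.le g p.1.2)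
    choose μ hμ using hmeet
    let P : OrdFam X :=
      { carrier := {p : A.carrier × B.carrier //
          OrdFamHom.toFun f p.1 = OrdFamHom.toFun g p.2}
        map := μ }
    let pfst : P ⟶ A := ⟨fun p => p.1.1, fun _ _ h => h.1, fun p => (hμ p).1⟩
    let psnd : P ⟶ B := ⟨fun p => p.1.2, fun _ _ h => h.2, fun p => (hμ p).2.1⟩
    have eq : pfst ≫ f = psnd ≫ g := OrdFamHom.ext (funext fun p => p.2)
    refine HasLimit.mk ⟨_, PullbackCone.IsLimit.mk eq
      (fun s => ⟨fun d => ⟨(OrdFamHom.toFun s.fst d, OrdFamHom.toFun s.snd d),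
          congrFun (congrArg OrdFamHom.toFun s.condition) d⟩,
        fun _ _ h => ⟨OrdFamHom.mono s.fst h, OrdFamHom.mono s.snd h⟩,
        fun d => (hμ _).2.2 _ (OrdFamHom.le s.fst d) (OrdFamHom.le s.snd d)⟩)
      (fun s => rfl) (fun s => rfl) (fun s m h1 h2 => ?_)⟩
    apply OrdFamHom.ext
    funext d
    exact Subtype.ext (Prod.ext (congrFun (congrArg OrdFamHom.toFun h1) d)
      (congrFun (congrArg OrdFamHom.toFun h2) d))
  exact @hasPullbacks_of_hasLimit_cospan _ _ (fun {A B C f g} => key f g)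



variable (X : Type u) [Preorder X]

/-- The set of connected components of an ordered set `X`: the quotient of `X` by the
equivalence relation generated by `≤` (zigzags). -/
def ConnComp : Type u := Quot (fun a b : X => a ≤ b)

/-- The connected component of `X` corresponding to `i`, as an ordered set. -/
def Component (i : ConnComp X) : Type u :=
  {x : X // Quot.mk (fun a b : X => a ≤ b) x = i}

instance (i : ConnComp X) : Preorder (Component X i) :=
  Subtype.preorder _

/-- The comparison functor `Ord // X ⥤ ∏_{i ∈ I} Ord // X_i`, where `(X_i)_{i ∈ I}` are the
connected components of `X`: it sends `(A, α)` to the family of (co)restrictions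
`(A_i, α_i : A_i → X_i)` with `A_i = α⁻¹(X_i)`. -/
def componentFunctor : OrdComma X ⥤ (∀ i : ConnComp X, OrdComma (Component X i)) where
  obj A := fun i =>
    { carrier := {a : A.carrier // Quot.mk (fun a b : X => a ≤ b) (A.map a) = i}
      map := fun a => ⟨A.map a.1, a.2⟩
      mono := fun _ _ h => A.mono h }
  map {A B} f := fun i =>
    { toFun := fun a => ⟨OrdCommaHom.toFun f a.1,
        (Quot.sound (OrdCommaHom.le f a.1)).symm.trans a.2⟩
      mono := fun _ _ h => OrdCommaHom.mono f h
      le := fun a => OrdCommaHom.le f a.1 }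
  map_id A := by
    funext i
    apply OrdCommaHom.ext
    funext a
    rfl
  map_comp f g := by
    funext i
    apply OrdCommaHom.ext
    funext a
    rfl



/-! ### Explicit pullbacks in `Fam(X)` -/

section ExplicitPullback

variable {Y : Type u} [Preorder Y] [HasPullbacks (FamCat Y)]
variable (hm : LocallyBinaryMeets Y) {A B C : FamCat Y} (g : C ⟶ B) (f : A ⟶ B)

include hm

theorem pbMeet (p : {p : C.idx × A.idx // FamHom.toFun g p.1 = FamHom.toFun f p.2}) :
    ∃ m, IsMeet (C.val p.1.1) (A.val p.1.2) m :=
  hm (B.val (FamHom.toFun g p.1.1)) _ _ (FamHom.le g p.1.1)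
    (by rw [p.2]; exact FamHom.le f p.1.2)

noncomputable def pbObj : FamCat Y :=
  ⟨{p : C.idx × A.idx // FamHom.toFun g p.1 = FamHom.toFun f p.2},
   fun p => (pbMeet hm g f p).choose⟩

theorem pbObj_isMeet (p : (pbObj hm g f).idx) :
    IsMeet (C.val p.1.1) (A.val p.1.2) ((pbObj hm g f).val p) :=
  (pbMeet hm g f p).choose_spec

noncomputable def pbFst : pbObj hm g f ⟶ C := ⟨fun p => p.1.1, fun p => (pbObj_isMeet hm g f p).1⟩

noncomputable def pbSnd : pbObj hm g f ⟶ A := ⟨fun p => p.1.2, fun p => (pbObj_isMeet hm g f p).2.1⟩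

theorem pb_w : pbFst hm g f ≫ g = pbSnd hm g f ≫ f := FamHom.ext (funext fun p => p.2)

noncomputable def pbCone : PullbackCone g f := PullbackCone.mk _ _ (pb_w hm g f)

noncomputable def pbIsLimit : IsLimit (pbCone hm g f) :=
  PullbackCone.IsLimit.mk _
    (fun s => ⟨fun d => ⟨(FamHom.toFun s.fst d, FamHom.toFun s.snd d),
        congrFun (congrArg FamHom.toFun s.condition) d⟩,
      fun d => (pbObj_isMeet hm g f _).2.2 _ (FamHom.le s.fst d) (FamHom.le s.snd d)⟩)
    (fun s => rfl) (fun s => rfl)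
    (fun s m h1 h2 => FamHom.ext (funext fun d => Subtype.ext (Prod.ext
      (congrFun (congrArg FamHom.toFun h1) d) (congrFun (congrArg FamHom.toFun h2) d))))

noncomputable def pbIso : pullback g f ≅ pbObj hm g f :=
  limit.isoLimitCone ⟨_, pbIsLimit hm g f⟩

theorem pbIso_hom_fst : (pbIso hm g f).hom ≫ pbFst hm g f = pullback.fst g f :=
  limit.isoLimitCone_hom_π ⟨_, pbIsLimit hm g f⟩ WalkingCospan.left

theorem pbIso_hom_snd : (pbIso hm g f).hom ≫ pbSnd hm g f = pullback.snd g f :=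
  limit.isoLimitCone_hom_π ⟨_, pbIsLimit hm g f⟩ WalkingCospan.right

theorem pbIso_inv_fst : (pbIso hm g f).inv ≫ pullback.fst g f = pbFst hm g f :=
  limit.isoLimitCone_inv_π ⟨_, pbIsLimit hm g f⟩ WalkingCospan.left

theorem pbIso_inv_snd : (pbIso hm g f).inv ≫ pullback.snd g f = pbSnd hm g f :=
  limit.isoLimitCone_inv_π ⟨_, pbIsLimit hm g f⟩ WalkingCospan.right

noncomputable def pbMk (l : C.idx) (j : A.idx) (h : FamHom.toFun g l = FamHom.toFun f j) :
    (pullback g f).idx :=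
  FamHom.toFun (pbIso hm g f).inv ⟨(l, j), h⟩

theorem fst_pbMk (l : C.idx) (j : A.idx) (h : FamHom.toFun g l = FamHom.toFun f j) :
    FamHom.toFun (pullback.fst g f) (pbMk hm g f l j h) = l :=
  congrFun (congrArg FamHom.toFun (pbIso_inv_fst hm g f)) ⟨(l, j), h⟩

theorem snd_pbMk (l : C.idx) (j : A.idx) (h : FamHom.toFun g l = FamHom.toFun f j) :
    FamHom.toFun (pullback.snd g f) (pbMk hm g f l j h) = j :=
  congrFun (congrArg FamHom.toFun (pbIso_inv_snd hm g f)) ⟨(l, j), h⟩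

theorem pb_cond_el (q : (pullback g f).idx) :
    FamHom.toFun g (FamHom.toFun (pullback.fst g f) q) =
      FamHom.toFun f (FamHom.toFun (pullback.snd g f) q) :=
  congrFun (congrArg FamHom.toFun (pullback.condition (f := g) (g := f))) q

theorem pb_ext {q q' : (pullback g f).idx}
    (h1 : FamHom.toFun (pullback.fst g f) q = FamHom.toFun (pullback.fst g f) q')
    (h2 : FamHom.toFun (pullback.snd g f) q = FamHom.toFun (pullback.snd g f) q') :
    q = q' := by
  have e1 : ∀ r : (pullback g f).idx,
      (FamHom.toFun (pbIso hm g f).hom r).1.1 = FamHom.toFun (pullback.fst g f) r :=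
    fun r => congrFun (congrArg FamHom.toFun (pbIso_hom_fst hm g f)) r
  have e2 : ∀ r : (pullback g f).idx,
      (FamHom.toFun (pbIso hm g f).hom r).1.2 = FamHom.toFun (pullback.snd g f) r :=
    fun r => congrFun (congrArg FamHom.toFun (pbIso_hom_snd hm g f)) r
  have e3 : FamHom.toFun (pbIso hm g f).hom q = FamHom.toFun (pbIso hm g f).hom q' :=
    Subtype.ext (Prod.ext ((e1 q).trans (h1.trans (e1 q').symm))
      ((e2 q).trans (h2.trans (e2 q').symm)))
  have e4 := congrArg (FamHom.toFun (pbIso hm g f).inv) e3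
  have e5 : ∀ r : (pullback g f).idx,
      FamHom.toFun (pbIso hm g f).inv (FamHom.toFun (pbIso hm g f).hom r) = r :=
    fun r => congrFun (congrArg FamHom.toFun (pbIso hm g f).hom_inv_id) r
  rw [e5, e5] at e4
  exact e4

theorem pb_surj (q : (pullback g f).idx) :
    q = pbMk hm g f (FamHom.toFun (pullback.fst g f) q) (FamHom.toFun (pullback.snd g f) q)
      (pb_cond_el hm g f q) :=
  pb_ext hm g f ((fst_pbMk hm g f _ _ _).symm) ((snd_pbMk hm g f _ _ _).symm)

theorem pb_val_isMeet (q : (pullback g f).idx) :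
    IsMeet (C.val (FamHom.toFun (pullback.fst g f) q))
      (A.val (FamHom.toFun (pullback.snd g f) q)) ((pullback g f).val q) := by
  refine ⟨FamHom.le (pullback.fst g f) q, FamHom.le (pullback.snd g f) q, fun u h1 h2 => ?_⟩
  have h3 := (pbObj_isMeet hm g f ⟨(_, _), pb_cond_el hm g f q⟩).2.2 u h1 h2
  have h4 : (pbObj hm g f).val ⟨(_, _), pb_cond_el hm g f q⟩ ≤
      (pullback g f).val (pbMk hm g f _ _ (pb_cond_el hm g f q)) :=
    FamHom.le (pbIso hm g f).inv _
  rw [← pb_surj hm g f q] at h4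
  exact h3.trans h4

theorem pb_lift_el {W : FamCat Y} (s : W ⟶ C) (t : W ⟶ A) (w : s ≫ g = t ≫ f) (d : W.idx) :
    FamHom.toFun (pullback.lift s t w) d =
      pbMk hm g f (FamHom.toFun s d) (FamHom.toFun t d)
        (congrFun (congrArg FamHom.toFun w) d) :=
  pb_ext hm g f
    (by rw [fst_pbMk]
        exact congrFun (congrArg FamHom.toFun (pullback.lift_fst s t w)) d)
    (by rw [snd_pbMk]
        exact congrFun (congrArg FamHom.toFun (pullback.lift_snd s t w)) d)

end ExplicitPullback


@[simp] theorem el_comp {Y : Type u} [Preorder Y] {A B C : FamCat Y} (u : A ⟶ B) (v : B ⟶ C)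
    (x : A.idx) : FamHom.toFun (u ≫ v) x = FamHom.toFun v (FamHom.toFun u x) := rfl

@[simp] theorem el_id {Y : Type u} [Preorder Y] {A : FamCat Y} (x : A.idx) :
    FamHom.toFun (𝟙 A) x = x := rfl

/-! ### Essential surjectivity of the comparison functor -/

theorem comparison_essSurj {Y : Type u} [Preorder Y] [HasPullbacks (FamCat Y)]
    (hX : LocallyComplete Y) (hc : LocallyCartesianClosed Y)
    {A B : FamCat Y} (f : A ⟶ B) :
    (Monad.comparison (Over.mapPullbackAdj f)).EssSurj := by
  have hm : LocallyBinaryMeets Y := hX.meets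
  constructor
  rintro ⟨D, a, hunit, hassoc⟩
  classical
  -- Notation: `g := D.hom ≫ f`.
  -- The "action" of the algebra on indices, as a total function.
  let ξ : D.left.idx → A.idx → D.left.idx := fun l j =>
    if h : FamHom.toFun (D.hom ≫ f) l = FamHom.toFun f j then
      FamHom.toFun a.left (pbMk hm (D.hom ≫ f) f l j h) else l
  have hξ : ∀ (l : D.left.idx) (j : A.idx) (h : FamHom.toFun (D.hom ≫ f) l = FamHom.toFun f j),
      ξ l j = FamHom.toFun a.left (pbMk hm (D.hom ≫ f) f l j h) := by
    intro l j h
    exact dif_pos h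
  -- (i) `D.hom` of the action
  have hψξ : ∀ l j (h : FamHom.toFun (D.hom ≫ f) l = FamHom.toFun f j),
      FamHom.toFun D.hom (ξ l j) = j := by
    intro l j h
    rw [hξ l j h]
    have w : FamHom.toFun D.hom
        (FamHom.toFun a.left (pbMk hm (D.hom ≫ f) f l j h)) =
        FamHom.toFun (pullback.snd (D.hom ≫ f) f) (pbMk hm (D.hom ≫ f) f l j h) :=
      congrFun (congrArg FamHom.toFun (Over.w a)) (pbMk hm (D.hom ≫ f) f l j h)
    rw [w, snd_pbMk]
  -- (iv) values
  have hξval : ∀ l j (h : FamHom.toFun (D.hom ≫ f) l = FamHom.toFun f j) (u : Y),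
      u ≤ D.left.val l → u ≤ A.val j → u ≤ D.left.val (ξ l j) := by
    intro l j h u h1 h2
    rw [hξ l j h]
    have hq := pb_val_isMeet hm (D.hom ≫ f) f (pbMk hm (D.hom ≫ f) f l j h)
    rw [fst_pbMk, snd_pbMk] at hq
    exact (hq.2.2 u h1 h2).trans (FamHom.le a.left _)
  -- (ii) unit law
  have hξid : ∀ l, ξ l (FamHom.toFun D.hom l) = l := by
    intro l
    rw [hξ l _ rfl]
    have hu : FamHom.toFun a.left
        (FamHom.toFun ((((Over.mapPullbackAdj f).toMonad).η.app D).left) l) = l :=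
      congrFun (congrArg FamHom.toFun (congrArg CommaMorphism.left hunit)) l
    have hl : (((Over.mapPullbackAdj f).toMonad).η.app D).left =
        pullback.lift (𝟙 D.left) D.hom (Category.id_comp (D.hom ≫ f)) := by
      rw [show ((Over.mapPullbackAdj f).toMonad).η.app D =
        (Over.mapPullbackAdj f).unit.app D from rfl, Over.mapPullbackAdj_unit_app]
      rfl
    rw [hl, pb_lift_el hm (D.hom ≫ f) f] at hu
    exact hu
  -- generic computation lemmas for the functors involved
  have hTfst : ∀ {W V : Over A} (k : W ⟶ V),
      ((Over.pullback f).map ((Over.map f).map k)).left ≫ pullback.fst (V.hom ≫ f) f =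
        pullback.fst (W.hom ≫ f) f ≫ k.left := by
    intro W V k
    exact pullback.lift_fst _ _ _
  have hTsnd : ∀ {W V : Over A} (k : W ⟶ V),
      ((Over.pullback f).map ((Over.map f).map k)).left ≫ pullback.snd (V.hom ≫ f) f =
        pullback.snd (W.hom ≫ f) f := by
    intro W V k
    exact pullback.lift_snd _ _ _
  have hEfst : ∀ (y : Over B),
      ((Over.pullback f).map ((Over.mapPullbackAdj f).counit.app y)).left ≫
          pullback.fst y.hom f =
        pullback.fst (pullback.snd y.hom f ≫ f) f ≫ pullback.fst y.hom f := by
    intro y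
    rw [Over.mapPullbackAdj_counit_app]
    exact pullback.lift_fst _ _ _
  have hEsnd : ∀ (y : Over B),
      ((Over.pullback f).map ((Over.mapPullbackAdj f).counit.app y)).left ≫
          pullback.snd y.hom f =
        pullback.snd (pullback.snd y.hom f ≫ f) f := by
    intro y
    rw [Over.mapPullbackAdj_counit_app]
    exact pullback.lift_snd _ _ _
  -- (iii) associativity law
  have hξassoc : ∀ l j j' (h : FamHom.toFun (D.hom ≫ f) l = FamHom.toFun f j)
      (h2 : FamHom.toFun f j = FamHom.toFun f j'),
      ξ (ξ l j) j' = ξ l j' := by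
    intro l j j' h h2
    have hgl2 : FamHom.toFun (D.hom ≫ f) (ξ l j) = FamHom.toFun f j' := by
      show FamHom.toFun f (FamHom.toFun D.hom (ξ l j)) = _
      rw [hψξ l j h]
      exact h2
    have hgl3 : FamHom.toFun (D.hom ≫ f) l = FamHom.toFun f j' := h.trans h2
    have hc2 : FamHom.toFun (pullback.snd (D.hom ≫ f) f ≫ f)
        (pbMk hm (D.hom ≫ f) f l j h) = FamHom.toFun f j' := by
      show FamHom.toFun f (FamHom.toFun (pullback.snd (D.hom ≫ f) f)
        (pbMk hm (D.hom ≫ f) f l j h)) = _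
      rw [snd_pbMk]
      exact h2
    set q₂ := pbMk hm (pullback.snd (D.hom ≫ f) f ≫ f) f
      (pbMk hm (D.hom ≫ f) f l j h) j' hc2 with hq₂
    have ha : FamHom.toFun a.left (FamHom.toFun
        (((Over.pullback f).map ((Over.mapPullbackAdj f).counit.app
          ((Over.map f).obj D))).left) q₂) =
        FamHom.toFun a.left (FamHom.toFun
        (((Over.pullback f).map ((Over.map f).map a)).left) q₂) :=
      congrFun (congrArg FamHom.toFun (congrArg CommaMorphism.left hassoc)) q₂
    -- compute the μ side
    have eμ : FamHom.toFun (((Over.pullback f).map ((Over.mapPullbackAdj f).counit.app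
        ((Over.map f).obj D))).left) q₂ = pbMk hm (D.hom ≫ f) f l j' hgl3 := by
      apply pb_ext hm (D.hom ≫ f) f
      · have t : FamHom.toFun (pullback.fst (D.hom ≫ f) f)
            (FamHom.toFun (((Over.pullback f).map ((Over.mapPullbackAdj f).counit.app
              ((Over.map f).obj D))).left) q₂) =
            FamHom.toFun (pullback.fst (D.hom ≫ f) f)
              (FamHom.toFun (pullback.fst (pullback.snd (D.hom ≫ f) f ≫ f) f) q₂) :=
          congrFun (congrArg FamHom.toFun (hEfst ((Over.map f).obj D))) q₂
        rw [fst_pbMk, t, hq₂, fst_pbMk, fst_pbMk]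
      · have t : FamHom.toFun (pullback.snd (D.hom ≫ f) f)
            (FamHom.toFun (((Over.pullback f).map ((Over.mapPullbackAdj f).counit.app
              ((Over.map f).obj D))).left) q₂) =
            FamHom.toFun (pullback.snd (pullback.snd (D.hom ≫ f) f ≫ f) f) q₂ :=
          congrFun (congrArg FamHom.toFun (hEsnd ((Over.map f).obj D))) q₂
        rw [snd_pbMk, t, hq₂, snd_pbMk]
    -- compute the T-map side
    have eT : FamHom.toFun (((Over.pullback f).map ((Over.map f).map a)).left) q₂ =
        pbMk hm (D.hom ≫ f) f (ξ l j) j' hgl2 := by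
      apply pb_ext hm (D.hom ≫ f) f
      · have t : FamHom.toFun (pullback.fst (D.hom ≫ f) f)
            (FamHom.toFun (((Over.pullback f).map ((Over.map f).map a)).left) q₂) =
            FamHom.toFun a.left
              (FamHom.toFun (pullback.fst (pullback.snd (D.hom ≫ f) f ≫ f) f) q₂) :=
          congrFun (congrArg FamHom.toFun (hTfst a)) q₂
        rw [fst_pbMk, t, hq₂, fst_pbMk, hξ l j h]
      · have t : FamHom.toFun (pullback.snd (D.hom ≫ f) f)
            (FamHom.toFun (((Over.pullback f).map ((Over.map f).map a)).left) q₂) =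
            FamHom.toFun (pullback.snd (pullback.snd (D.hom ≫ f) f ≫ f) f) q₂ :=
          congrFun (congrArg FamHom.toFun (hTsnd a)) q₂
        rw [snd_pbMk, t, hq₂, snd_pbMk]
    rw [eμ, eT] at ha
    rw [hξ (ξ l j) j' hgl2, hξ l j' hgl3]
    exact ha.symm
  -- relation lemmas
  have hgconst : ∀ l j (h : FamHom.toFun (D.hom ≫ f) l = FamHom.toFun f j),
      FamHom.toFun (D.hom ≫ f) (ξ l j) = FamHom.toFun (D.hom ≫ f) l := by
    intro l j h
    show FamHom.toFun f (FamHom.toFun D.hom (ξ l j)) = _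
    rw [hψξ l j h]
    exact h.symm
  -- the setoid of connected components of the action
  let r : D.left.idx → D.left.idx → Prop := fun l l' =>
    ∃ j, ∃ _ : FamHom.toFun (D.hom ≫ f) l = FamHom.toFun f j, ξ l j = l'
  have hrefl : ∀ l, r l l := fun l => ⟨FamHom.toFun D.hom l, rfl, hξid l⟩
  have hsymm : ∀ {l l'}, r l l' → r l' l := by
    rintro l l' ⟨j, h, rfl⟩
    refine ⟨FamHom.toFun D.hom l, ?_, ?_⟩
    · rw [hgconst l j h]
      exact rfl
    · rw [hξassoc l j (FamHom.toFun D.hom l) h h.symm]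
      exact hξid l
  have htrans : ∀ {l l' l''}, r l l' → r l' l'' → r l l'' := by
    rintro l l' l'' ⟨j, h, rfl⟩ ⟨j', h', rfl⟩
    have h2 : FamHom.toFun f j = FamHom.toFun f j' := by
      rw [← h, ← hgconst l j h]
      exact h'
    exact ⟨j', h.trans h2, (hξassoc l j j' h h2).symm⟩
  let sd : Setoid D.left.idx := ⟨r, hrefl, hsymm, htrans⟩
  have hgr : ∀ {l l'}, r l l' → FamHom.toFun (D.hom ≫ f) l = FamHom.toFun (D.hom ≫ f) l' := by
    rintro l l' ⟨j, h, rfl⟩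
    exact (hgconst l j h).symm
  have hξconst : ∀ {l l'} (j : A.idx), r l l' →
      FamHom.toFun (D.hom ≫ f) l = FamHom.toFun f j → ξ l j = ξ l' j := by
    rintro l l' j ⟨j₀, h₀, rfl⟩ h
    have h2 : FamHom.toFun f j₀ = FamHom.toFun f j := h₀.symm.trans h
    exact (hξassoc l j₀ j h₀ h2).symm
  -- the quotient family
  let θ : Quotient sd → B.idx := Quotient.lift
    (fun l => FamHom.toFun (D.hom ≫ f) l) (fun _ _ h => hgr h)
  have hS : ∀ m : Quotient sd,
      ∀ s ∈ {x : Y | ∃ l, Quotient.mk sd l = m ∧ x = D.left.val l}, s ≤ B.val (θ m) := by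
    rintro m s ⟨l, rfl, rfl⟩
    exact (FamHom.le D.hom l).trans (FamHom.le f (FamHom.toFun D.hom l))
  choose δ hδ using fun m => hX (B.val (θ m)) _ (hS m)
  let N : FamCat Y := ⟨Quotient sd, δ⟩
  let nB : N ⟶ B := ⟨θ, fun m => (hδ m).1⟩
  -- the quotient morphism and the comparison maps
  let qm : D.left ⟶ N := ⟨fun l => Quotient.mk sd l,
    fun l => (hδ (Quotient.mk sd l)).2.1 _ ⟨l, rfl, rfl⟩⟩
  have wq : qm ≫ nB = D.hom ≫ f := FamHom.ext (funext fun l => rfl)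
  let u : D.left ⟶ (pullback nB f : FamCat Y) := pullback.lift qm D.hom wq
  -- the inverse map
  let vfun : (pullback nB f : FamCat Y).idx → D.left.idx := fun q =>
    ξ (Quotient.out (FamHom.toFun (pullback.fst nB f) q)) (FamHom.toFun (pullback.snd nB f) q)
  have hout : ∀ (q : (pullback nB f : FamCat Y).idx),
      FamHom.toFun (D.hom ≫ f) (Quotient.out (FamHom.toFun (pullback.fst nB f) q)) =
        FamHom.toFun f (FamHom.toFun (pullback.snd nB f) q) := by
    intro q
    have h1 := pb_cond_el hm nB f q
    have h2 : FamHom.toFun nB (Quotient.mk sd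
        (Quotient.out (FamHom.toFun (pullback.fst nB f) q))) =
        FamHom.toFun nB (FamHom.toFun (pullback.fst nB f) q) :=
      congrArg (FamHom.toFun nB) (Quotient.out_eq _)
    exact h2.trans h1
  have houtrel : ∀ (l : D.left.idx), r (Quotient.out (Quotient.mk sd l)) l :=
    fun l => Quotient.exact (s := sd) (Quotient.out_eq _)
  -- the value inequality, using local cartesian closedness
  have hvle : ∀ q, (pullback nB f : FamCat Y).val q ≤ D.left.val (vfun q) := by
    intro q
    have hcond := pb_cond_el hm nB f q
    have hz : D.left.val (vfun q) ≤ B.val (FamHom.toFun f (FamHom.toFun (pullback.snd nB f) q)) := by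
      have t1 : D.left.val (vfun q) ≤ A.val (FamHom.toFun D.hom (vfun q)) := FamHom.le D.hom _
      rw [show FamHom.toFun D.hom (vfun q) = FamHom.toFun (pullback.snd nB f) q from
        hψξ _ _ (hout q)] at t1
      exact t1.trans (FamHom.le f _)
    obtain ⟨e, he, hiff⟩ := hc.2 (B.val (FamHom.toFun f (FamHom.toFun (pullback.snd nB f) q)))
      (A.val (FamHom.toFun (pullback.snd nB f) q)) (D.left.val (vfun q))
      (FamHom.le f _) hz
    have hje : ∀ l, Quotient.mk sd l = FamHom.toFun (pullback.fst nB f) q →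
        D.left.val l ≤ e := by
      intro l hl
      have hgl : FamHom.toFun (D.hom ≫ f) l = FamHom.toFun f
          (FamHom.toFun (pullback.snd nB f) q) := by
        have : FamHom.toFun nB (Quotient.mk sd l) =
            FamHom.toFun nB (FamHom.toFun (pullback.fst nB f) q) := congrArg _ hl
        exact this.trans hcond
      have hwx : D.left.val l ≤ B.val (FamHom.toFun f (FamHom.toFun (pullback.snd nB f) q)) := by
        have t1 : D.left.val l ≤ B.val (FamHom.toFun (D.hom ≫ f) l) :=
          (FamHom.le D.hom l).trans (FamHom.le f _)
        rw [hgl] at t1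
        exact t1
      refine (hiff (D.left.val l) hwx).1 ?_
      obtain ⟨mm, hmm⟩ := hm (B.val (FamHom.toFun f (FamHom.toFun (pullback.snd nB f) q)))
        (D.left.val l) (A.val (FamHom.toFun (pullback.snd nB f) q)) hwx (FamHom.le f _)
      refine ⟨mm, hmm, ?_⟩
      have hmv : mm ≤ D.left.val (ξ l (FamHom.toFun (pullback.snd nB f) q)) :=
        hξval l _ hgl mm hmm.1 hmm.2.1
      have hrel : r l (Quotient.out (FamHom.toFun (pullback.fst nB f) q)) := by
        have := houtrel l
        rw [hl] at this
        exact hsymm this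
      rw [show vfun q = ξ l (FamHom.toFun (pullback.snd nB f) q) from
        (hξconst _ hrel hgl).symm]
      exact hmv
    have hde : δ (FamHom.toFun (pullback.fst nB f) q) ≤ e := by
      refine (hδ (FamHom.toFun (pullback.fst nB f) q)).2.2 e ?_ ?_
      · rw [show θ (FamHom.toFun (pullback.fst nB f) q) =
          FamHom.toFun f (FamHom.toFun (pullback.snd nB f) q) from hcond]
        exact he
      · rintro s ⟨l, hl, rfl⟩
        exact hje l hl
    have hdx : δ (FamHom.toFun (pullback.fst nB f) q) ≤
        B.val (FamHom.toFun f (FamHom.toFun (pullback.snd nB f) q)) := by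
      have t := (hδ (FamHom.toFun (pullback.fst nB f) q)).1
      rw [show θ (FamHom.toFun (pullback.fst nB f) q) =
        FamHom.toFun f (FamHom.toFun (pullback.snd nB f) q) from hcond] at t
      exact t
    obtain ⟨mm', hmm', hle'⟩ := (hiff _ hdx).2 hde
    have hq := pb_val_isMeet hm nB f q
    exact (hmm'.2.2 _ hq.1 hq.2.1).trans hle'
  let v : (pullback nB f : FamCat Y) ⟶ D.left := ⟨vfun, hvle⟩
  -- `u` and `v` are mutually inverse
  have hvq : ∀ (m : Quotient sd) (j : A.idx)
      (hc1 : FamHom.toFun nB m = FamHom.toFun f j),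
      vfun (pbMk hm nB f m j hc1) = ξ (Quotient.out m) j := by
    intro m j hc1
    show ξ (Quotient.out (FamHom.toFun (pullback.fst nB f) (pbMk hm nB f m j hc1)))
      (FamHom.toFun (pullback.snd nB f) (pbMk hm nB f m j hc1)) = _
    rw [fst_pbMk, snd_pbMk]
  have huel : ∀ l, FamHom.toFun u l = pbMk hm nB f (Quotient.mk sd l)
      (FamHom.toFun D.hom l) (congrFun (congrArg FamHom.toFun wq) l) :=
    fun l => pb_lift_el hm nB f qm D.hom wq l
  have huv : u ≫ v = 𝟙 D.left := by
    apply FamHom.ext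
    funext l
    show vfun (FamHom.toFun u l) = l
    rw [huel l, hvq]
    have hrel : r (Quotient.out (Quotient.mk sd l)) l := houtrel l
    rw [hξconst (FamHom.toFun D.hom l) hrel (hgr hrel)]
    exact hξid l
  have hvu : v ≫ u = 𝟙 (pullback nB f : FamCat Y) := by
    apply FamHom.ext
    funext q
    show FamHom.toFun u (vfun q) = q
    rw [huel (vfun q)]
    apply pb_ext hm nB f
    · rw [fst_pbMk]
      have hr1 : r (Quotient.out (FamHom.toFun (pullback.fst nB f) q))
          (ξ (Quotient.out (FamHom.toFun (pullback.fst nB f) q))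
            (FamHom.toFun (pullback.snd nB f) q)) :=
        ⟨_, hout q, rfl⟩
      exact (Quotient.sound (s := sd) hr1).symm.trans (Quotient.out_eq _)
    · rw [snd_pbMk]
      exact hψξ _ _ (hout q)
  -- assemble the isomorphism of algebras
  have hwv : v ≫ D.hom = ((Over.pullback f).obj (Over.mk nB)).hom := by
    apply FamHom.ext
    funext q
    exact hψξ _ _ (hout q)
  refine ⟨Over.mk nB, ⟨Monad.Algebra.isoMk (Over.isoMk (Iso.mk v u hvu huv) hwv) ?_⟩⟩
  -- the algebra compatibility
  apply Over.OverMorphism.ext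
  apply FamHom.ext
  funext q₂
  -- q₂ lives in the pullback of `pullback.snd nB f ≫ f` and `f`
  have hcond2 : FamHom.toFun f (FamHom.toFun (pullback.snd nB f)
      (FamHom.toFun (pullback.fst (pullback.snd nB f ≫ f) f) q₂)) =
      FamHom.toFun f (FamHom.toFun (pullback.snd (pullback.snd nB f ≫ f) f) q₂) :=
    pb_cond_el hm (pullback.snd nB f ≫ f) f q₂
  have hcnd : FamHom.toFun (D.hom ≫ f)
      (vfun (FamHom.toFun (pullback.fst (pullback.snd nB f ≫ f) f) q₂)) =
      FamHom.toFun f (FamHom.toFun (pullback.snd (pullback.snd nB f ≫ f) f) q₂) := by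
    show FamHom.toFun f (FamHom.toFun D.hom
      (vfun (FamHom.toFun (pullback.fst (pullback.snd nB f ≫ f) f) q₂))) = _
    rw [show FamHom.toFun D.hom (vfun (FamHom.toFun (pullback.fst (pullback.snd nB f ≫ f) f) q₂))
      = FamHom.toFun (pullback.snd nB f) (FamHom.toFun (pullback.fst (pullback.snd nB f ≫ f) f) q₂)
      from hψξ _ _ (hout _)]
    exact hcond2
  have hcnd2 : FamHom.toFun nB (FamHom.toFun (pullback.fst nB f)
      (FamHom.toFun (pullback.fst (pullback.snd nB f ≫ f) f) q₂)) =
      FamHom.toFun f (FamHom.toFun (pullback.snd (pullback.snd nB f ≫ f) f) q₂) := by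
    have t := pb_cond_el hm nB f (FamHom.toFun (pullback.fst (pullback.snd nB f ≫ f) f) q₂)
    exact t.trans hcond2
  show FamHom.toFun a.left (FamHom.toFun
      (((Over.pullback f).map ((Over.map f).map
        (Over.homMk v hwv : (Over.pullback f).obj (Over.mk nB) ⟶ D))).left) q₂) =
    vfun (FamHom.toFun (((Over.pullback f).map
      ((Over.mapPullbackAdj f).counit.app (Over.mk nB))).left) q₂)
  -- compute the left-hand side
  have eL : FamHom.toFun (((Over.pullback f).map ((Over.map f).map
      (Over.homMk v hwv : (Over.pullback f).obj (Over.mk nB) ⟶ D))).left) q₂ =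
      pbMk hm (D.hom ≫ f) f
        (vfun (FamHom.toFun (pullback.fst (pullback.snd nB f ≫ f) f) q₂))
        (FamHom.toFun (pullback.snd (pullback.snd nB f ≫ f) f) q₂) hcnd := by
    apply pb_ext hm (D.hom ≫ f) f
    · have t : FamHom.toFun (pullback.fst (D.hom ≫ f) f)
          (FamHom.toFun (((Over.pullback f).map ((Over.map f).map
            (Over.homMk v hwv : (Over.pullback f).obj (Over.mk nB) ⟶ D))).left) q₂) =
          vfun (FamHom.toFun (pullback.fst (pullback.snd nB f ≫ f) f) q₂) :=
        congrFun (congrArg FamHom.toFun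
          (hTfst (Over.homMk v hwv : (Over.pullback f).obj (Over.mk nB) ⟶ D))) q₂
      rw [fst_pbMk, t]
    · have t : FamHom.toFun (pullback.snd (D.hom ≫ f) f)
          (FamHom.toFun (((Over.pullback f).map ((Over.map f).map
            (Over.homMk v hwv : (Over.pullback f).obj (Over.mk nB) ⟶ D))).left) q₂) =
          FamHom.toFun (pullback.snd (pullback.snd nB f ≫ f) f) q₂ :=
        congrFun (congrArg FamHom.toFun
          (hTsnd (Over.homMk v hwv : (Over.pullback f).obj (Over.mk nB) ⟶ D))) q₂
      rw [snd_pbMk, t]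
  -- compute the right-hand side
  have eR : FamHom.toFun (((Over.pullback f).map
      ((Over.mapPullbackAdj f).counit.app (Over.mk nB))).left) q₂ =
      pbMk hm nB f
        (FamHom.toFun (pullback.fst nB f)
          (FamHom.toFun (pullback.fst (pullback.snd nB f ≫ f) f) q₂))
        (FamHom.toFun (pullback.snd (pullback.snd nB f ≫ f) f) q₂) hcnd2 := by
    apply pb_ext hm nB f
    · have t : FamHom.toFun (pullback.fst nB f)
          (FamHom.toFun (((Over.pullback f).map
            ((Over.mapPullbackAdj f).counit.app (Over.mk nB))).left) q₂) =
          FamHom.toFun (pullback.fst nB f)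
            (FamHom.toFun (pullback.fst (pullback.snd nB f ≫ f) f) q₂) :=
        congrFun (congrArg FamHom.toFun (hEfst (Over.mk nB))) q₂
      rw [fst_pbMk, t]
    · have t : FamHom.toFun (pullback.snd nB f)
          (FamHom.toFun (((Over.pullback f).map
            ((Over.mapPullbackAdj f).counit.app (Over.mk nB))).left) q₂) =
          FamHom.toFun (pullback.snd (pullback.snd nB f ≫ f) f) q₂ :=
        congrFun (congrArg FamHom.toFun (hEsnd (Over.mk nB))) q₂
      rw [snd_pbMk, t]
  rw [eL, eR, hvq, ← hξ _ _ hcnd]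
  -- now both sides are `ξ`-expressions
  have hfj : FamHom.toFun f (FamHom.toFun (pullback.snd nB f)
      (FamHom.toFun (pullback.fst (pullback.snd nB f ≫ f) f) q₂)) =
      FamHom.toFun f (FamHom.toFun (pullback.snd (pullback.snd nB f ≫ f) f) q₂) := hcond2
  exact hξassoc (Quotient.out (FamHom.toFun (pullback.fst nB f)
      (FamHom.toFun (pullback.fst (pullback.snd nB f ≫ f) f) q₂)))
    (FamHom.toFun (pullback.snd nB f) (FamHom.toFun (pullback.fst (pullback.snd nB f ≫ f) f) q₂))
    (FamHom.toFun (pullback.snd (pullback.snd nB f ≫ f) f) q₂)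
    (hout _) hfj

/-- **Lemma (Prezado).** For `X` locally complete and locally cartesian closed, a morphism in
`Fam(X)` is an effective descent morphism iff it is a descent morphism. -/
theorem statement9 {X : Type u} [Preorder X] (hX : LocallyComplete X)
    (hc : LocallyCartesianClosed X) {A B : FamCat X} (f : A ⟶ B) :
    @IsEffectiveDescentMorphism (FamCat X) _ (FamCat.hasPullbacks hX.meets) _ _ f ↔
      @IsDescentMorphism (FamCat X) _ (FamCat.hasPullbacks hX.meets) _ _ f := by
  letI : HasPullbacks (FamCat X) := FamCat.hasPullbacks hX.meets
  constructor
  · intro h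
    exact ⟨h.full, h.faithful⟩
  · rintro ⟨h1, h2⟩
    exact { full := h1, faithful := h2, essSurj := comparison_essSurj hX hc f }

end Desc
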